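/- Let D be a digraph on n vertices of vertex connectivity κ which is not complete (i.e., some ordered pair of distinct vertices is not an edge). Then either D or its transpose D* has an atom A with 2|A| ≤ n − κ. -/

import Mathlib

open Classical

/-- A digraph (given by its edge relation `E`) is strongly connected iff for every
ordered pair of vertices there is a directed path from the first to the second. -/
def SC {V : Type*} (E : V → V → Prop) : Prop :=
  ∀ a b : V, Relation.ReflTransGen E a b

/-- The subdigraph induced on `A` is strongly connected. -/
def SCOn {V : Type*} (E : V → V → Prop) (A : Set V) : Prop :=
  ∀ a ∈ A, ∀ b ∈ A, Relation.ReflTransGen (fun x y => x ∈ A ∧ y ∈ A ∧ E x y) a b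

/-- Out-neighborhood of a set of vertices. -/
def Nout {V : Type*} (E : V → V → Prop) (A : Set V) : Set V :=
  {x | x ∉ A ∧ ∃ y ∈ A, E y x}

/-- Vertex connectivity: the least cardinality of a set `T` of vertices whose removal
leaves a non-strongly-connected digraph; `Nat.card V - 1` if no such `T` exists. -/
noncomputable def kappa {V : Type*} [Finite V] (E : V → V → Prop) : ℕ :=
  if ∃ T : Set V, ¬ SCOn E Tᶜ then
    sInf {m | ∃ T : Set V, T.ncard = m ∧ ¬ SCOn E Tᶜ}
  else Nat.card V - 1

/-- A part of a digraph. -/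
def IsPart {V : Type*} (E : V → V → Prop) (A : Set V) : Prop :=
  A.Nonempty ∧ ((A ∪ Nout E A)ᶜ : Set V).Nonempty

/-- An atom: a part with `|N(A)| = κ` of minimum cardinality among such parts. -/
def IsAtomD {V : Type*} [Finite V] (E : V → V → Prop) (A : Set V) : Prop :=
  IsPart E A ∧ (Nout E A).ncard = kappa E ∧
    ∀ B : Set V, IsPart E B → (Nout E B).ncard = kappa E → A.ncard ≤ B.ncard

/- ## Auxiliary lemmas -/

lemma scOn_swap_mp {V : Type*} (E : V → V → Prop) (A : Set V)
    (h : SCOn E A) : SCOn (fun x y => E y x) A := by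
  intro a ha b hb
  have hh := h b hb a ha
  have hh2 : Relation.ReflTransGen
      (Function.swap fun x y => x ∈ A ∧ y ∈ A ∧ (fun x y => E y x) x y) b a :=
    Relation.ReflTransGen.mono (by intro x y ⟨h1, h2, h3⟩; exact ⟨h2, h1, h3⟩) b a hh
  exact Relation.reflTransGen_swap.1 hh2

lemma scOn_swap {V : Type*} (E : V → V → Prop) (A : Set V) :
    SCOn (fun x y => E y x) A ↔ SCOn E A :=
  ⟨fun h => scOn_swap_mp _ A h, fun h => scOn_swap_mp E A h⟩

lemma kappa_swap {V : Type*} [Finite V] (E : V → V → Prop) :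
    kappa (fun x y => E y x) = kappa E := by
  have h : ∀ T : Set V, SCOn (fun x y => E y x) Tᶜ ↔ SCOn E Tᶜ := fun T => scOn_swap E Tᶜ
  unfold kappa
  simp only [h]

lemma kappa_le_of_not_scOn {V : Type*} [Finite V] (E : V → V → Prop) (T : Set V)
    (hT : ¬ SCOn E Tᶜ) : kappa E ≤ T.ncard := by
  rw [kappa, if_pos ⟨T, hT⟩]
  exact Nat.sInf_le ⟨T, rfl, hT⟩

lemma not_scOn_nout_of_part {V : Type*} (E : V → V → Prop) (B : Set V)
    (hB : IsPart E B) : ¬ SCOn E (Nout E B)ᶜ := by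
  obtain ⟨⟨b, hb⟩, ⟨c, hc⟩⟩ := hB
  intro h
  have hbc : b ∈ (Nout E B)ᶜ := fun hbn => hbn.1 hb
  have hcB : c ∉ B := fun hcB => hc (Set.mem_union_left _ hcB)
  have hcN : c ∈ (Nout E B)ᶜ := fun hcn => hc (Set.mem_union_right _ hcn)
  have key : ∀ z, Relation.ReflTransGen
      (fun x y => x ∈ (Nout E B)ᶜ ∧ y ∈ (Nout E B)ᶜ ∧ E x y) b z → z ∈ B := by
    intro z hz
    induction hz with
    | refl => exact hb
    | tail _ e ih =>
      by_contra hz'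
      exact e.2.1 ⟨hz', _, ih, e.2.2⟩
  exact hcB (key c (h b hbc c hcN))

lemma kappa_le_nout_of_part {V : Type*} [Finite V] (E : V → V → Prop) (B : Set V)
    (hB : IsPart E B) : kappa E ≤ (Nout E B).ncard :=
  kappa_le_of_not_scOn E _ (not_scOn_nout_of_part E B hB)

lemma exists_part_kappa {V : Type*} [Finite V] (E : V → V → Prop)
    (hnc : ∃ x y : V, x ≠ y ∧ ¬ E x y) :
    ∃ A : Set V, IsPart E A ∧ (Nout E A).ncard = kappa E := by
  obtain ⟨x, y, hxy, hE⟩ := hnc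
  -- the set {x,y}ᶜ disconnects
  have h0 : ¬ SCOn E ({x, y}ᶜ : Set V)ᶜ := by
    rw [compl_compl]
    intro h
    have hx : x ∈ ({x, y} : Set V) := Set.mem_insert _ _
    have hy : y ∈ ({x, y} : Set V) := Set.mem_insert_of_mem _ rfl
    have key : ∀ z, Relation.ReflTransGen
        (fun u v => u ∈ ({x, y} : Set V) ∧ v ∈ ({x, y} : Set V) ∧ E u v) x z → z = x := by
      intro z hz
      induction hz with
      | refl => rfl
      | tail _ e ih =>
        subst ih
        rcases e.2.1 with h | h
        · exact h
        · exact absurd (h ▸ e.2.2) hE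
    exact hxy ((key y (h x hx y hy)).symm)
  have hcond : ∃ T : Set V, ¬ SCOn E Tᶜ := ⟨_, h0⟩
  have hmem : kappa E ∈ {m | ∃ T : Set V, T.ncard = m ∧ ¬ SCOn E Tᶜ} := by
    rw [kappa, if_pos hcond]
    exact Nat.sInf_mem ⟨_, _, rfl, h0⟩
  obtain ⟨T, hTcard, hT⟩ := hmem
  -- get a, b in Tᶜ with no path
  simp only [SCOn, not_forall] at hT
  obtain ⟨a, ha, b, hb, hab⟩ := hT
  set r : V → V → Prop := fun u v => u ∈ Tᶜ ∧ v ∈ Tᶜ ∧ E u v with hr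
  set A : Set V := {v | v ∈ Tᶜ ∧ Relation.ReflTransGen r a v} with hA
  have hNsub : Nout E A ⊆ T := by
    rintro z ⟨hzA, w, hwA, hE'⟩
    by_contra hzT
    exact hzA ⟨hzT, hwA.2.tail ⟨hwA.1, hzT, hE'⟩⟩
  have hbA : b ∉ A := fun h => hab h.2
  have hpart : IsPart E A := by
    refine ⟨⟨a, ha, Relation.ReflTransGen.refl⟩, ⟨b, ?_⟩⟩
    rintro (h | h)
    · exact hbA h
    · exact hb (hNsub h)
  refine ⟨A, hpart, le_antisymm ?_ (kappa_le_nout_of_part E A hpart)⟩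
  calc (Nout E A).ncard ≤ T.ncard := Set.ncard_le_ncard hNsub (Set.toFinite T)
    _ = kappa E := hTcard

lemma exists_atom {V : Type*} [Finite V] (E : V → V → Prop)
    (hnc : ∃ x y : V, x ≠ y ∧ ¬ E x y) : ∃ A : Set V, IsAtomD E A := by
  obtain ⟨A0, hA0p, hA0n⟩ := exists_part_kappa E hnc
  have hmem : sInf {m | ∃ B : Set V, IsPart E B ∧ (Nout E B).ncard = kappa E ∧ B.ncard = m}
      ∈ {m | ∃ B : Set V, IsPart E B ∧ (Nout E B).ncard = kappa E ∧ B.ncard = m} :=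
    Nat.sInf_mem ⟨_, A0, hA0p, hA0n, rfl⟩
  obtain ⟨A, hAp, hAn, hAc⟩ := hmem
  refine ⟨A, hAp, hAn, fun B hBp hBn => ?_⟩
  rw [hAc]
  exact Nat.sInf_le ⟨B, hBp, hBn, rfl⟩

/-- A non-complete digraph `D` on `n` vertices has, in `D` or in its transpose `D*`,
an atom `A` with `2|A| ≤ n − κ`. -/
theorem stmt_5 {V : Type*} [Finite V] (E : V → V → Prop)
    (hnc : ∃ x y : V, x ≠ y ∧ ¬ E x y) :
    (∃ A : Set V, IsAtomD E A ∧ 2 * A.ncard ≤ Nat.card V - kappa E) ∨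
    (∃ A : Set V, IsAtomD (fun x y => E y x) A ∧
      2 * A.ncard ≤ Nat.card V - kappa (fun x y => E y x)) := by
  obtain ⟨A, hA⟩ := exists_atom E hnc
  have hnc' : ∃ x y : V, x ≠ y ∧ ¬ (fun x y => E y x) x y := by
    obtain ⟨x, y, hxy, hE⟩ := hnc
    exact ⟨y, x, hxy.symm, hE⟩
  obtain ⟨B, hB⟩ := exists_atom (fun x y => E y x) hnc'
  have hApart := hA.1
  have hAn := hA.2.1
  set E' : V → V → Prop := fun x y => E y x with hE'
  set C : Set V := (A ∪ Nout E A)ᶜ with hC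
  have hCne : C.Nonempty := hApart.2
  -- disjointness of A and Nout E A
  have hdisj : Disjoint A (Nout E A) := by
    rw [Set.disjoint_left]
    exact fun x hx hx' => hx'.1 hx
  -- Nout E' C ⊆ Nout E A
  have hNsub : Nout E' C ⊆ Nout E A := by
    rintro z ⟨hzC, w, hwC, hE1⟩
    -- hE1 : E' w z i.e. E z w
    have hz : z ∈ A ∪ Nout E A := by
      by_contra h; exact hzC h
    rcases hz with h | h
    · have hw : w ∈ Nout E A := ⟨fun hwA => hwC (Set.mem_union_left _ hwA), z, h, hE1⟩
      exact absurd (Set.mem_union_right _ hw) hwC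
    · exact h
  -- C is a part of E'
  obtain ⟨a, haA⟩ := hApart.1
  have hCpart : IsPart E' C := by
    refine ⟨hCne, ⟨a, ?_⟩⟩
    rintro (h | h)
    · exact h (Set.mem_union_left _ haA)
    · exact (hNsub h).1 haA
  have hkswap : kappa E' = kappa E := kappa_swap E
  have hCN : (Nout E' C).ncard = kappa E' := by
    refine le_antisymm ?_ (kappa_le_nout_of_part E' C hCpart)
    calc (Nout E' C).ncard ≤ (Nout E A).ncard := Set.ncard_le_ncard hNsub (Set.toFinite _)
      _ = kappa E := hAn
      _ = kappa E' := hkswap.symm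
  -- atom B minimality
  have hBC : B.ncard ≤ C.ncard := hB.2.2 C hCpart hCN
  -- cardinalities
  have hunion : (A ∪ Nout E A).ncard = A.ncard + kappa E := by
    rw [Set.ncard_union_eq hdisj (Set.toFinite _) (Set.toFinite _), hAn]
  have hcompl : (A ∪ Nout E A).ncard + C.ncard = Nat.card V :=
    Set.ncard_add_ncard_compl _ (Set.toFinite _) (Set.toFinite _)
  have hsum : A.ncard + B.ncard ≤ Nat.card V - kappa E := by omega
  rcases le_total A.ncard B.ncard with h | h
  · exact Or.inl ⟨A, hA, by omega⟩
  · refine Or.inr ⟨B, hB, ?_⟩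
    have : kappa (fun x y => E y x) = kappa E := kappa_swap E
    omega
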